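/- For a monoid H, the following are equivalent: (a) H is aperiodic, i.e. for every x ∈ H with x ≠ 1_H the submonoid generated by x is infinite; (b) 𝒫fin,1(H) is BF, i.e. every X ≠ {1_H} in 𝒫fin,1(H) admits a factorization into irreducibles and, for each X, the set of lengths of factorizations of X is bounded above; (c) 𝒫fin,1(H) is FF, i.e. every X ≠ {1_H} admits a factorization into irreducibles and has only finitely many factorizations up to permutation. -/

import Mathlib

open scoped Pointwise

section Defs

variable {M : Type*} [Monoid M]

/-- `x` divides `y` (two-sidedly) in a monoid: `y = u * x * v` for some `u v`. -/
def dvdTS (x y : M) : Prop := ∃ u v : M, y = u * x * v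

/-- A non-unit-divisor: an element that does not divide `1`. -/
def isNonUnitDivisor (x : M) : Prop := ¬ dvdTS x 1

/-- `x` properly divides `y`: `x` divides `y` but `y` does not divide `x`. -/
def properDvdTS (x y : M) : Prop := dvdTS x y ∧ ¬ dvdTS y x

/-- An irreducible: a non-unit-divisor `a` with `a ≠ x * y` whenever `x, y` are
non-unit-divisors properly dividing `a`. -/
def isIrred (a : M) : Prop :=
  isNonUnitDivisor a ∧
    ∀ x y : M, isNonUnitDivisor x → isNonUnitDivisor y →
      properDvdTS x a → properDvdTS y a → a ≠ x * y

/-- An atom: a non-unit-divisor that is not a product of two non-unit-divisors. -/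
def isAtomTS (a : M) : Prop :=
  isNonUnitDivisor a ∧ ∀ x y : M, isNonUnitDivisor x → isNonUnitDivisor y → a ≠ x * y

/-- A quark: a non-unit-divisor not properly divided by any non-unit-divisor. -/
def isQuarkTS (a : M) : Prop :=
  isNonUnitDivisor a ∧ ∀ x : M, isNonUnitDivisor x → ¬ properDvdTS x a

/-- A factorization of `x` into irreducibles, recorded as a list. -/
def IsFactorization (l : List M) (x : M) : Prop :=
  (∀ a ∈ l, isIrred a) ∧ l.prod = x

/-- A minimal factorization: a factorization of `x` such that no product, in any order,
of a proper sub-multiset of its factors equals `x`. -/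
def IsMinimalFactorization (l : List M) (x : M) : Prop :=
  IsFactorization l x ∧
    ∀ l' : List M, (↑l' : Multiset M) < (↑l : Multiset M) → l'.prod ≠ x

end Defs

/-- A unique minimal factorization (UmF) monoid: every non-identity element has a minimal
factorization into irreducibles, unique up to permutation of the factors. -/
def IsUmF (M : Type*) [Monoid M] : Prop :=
  (∀ x : M, x ≠ 1 → ∃ l : List M, IsMinimalFactorization l x) ∧
    ∀ x : M, ∀ l l' : List M,
      IsMinimalFactorization l x → IsMinimalFactorization l' x → l.Perm l'

/-- The reduced finitary power monoid `𝒫fin,1(H)` of a monoid `H`: the submonoid of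
`Finset H` (under pointwise multiplication) of finite subsets containing `1`. -/
def redPow (H : Type*) [Monoid H] [DecidableEq H] : Submonoid (Finset H) where
  carrier := {X : Finset H | (1 : H) ∈ X}
  one_mem' := by simp
  mul_mem' := by
    intro X Y hX hY
    simpa using Finset.mul_mem_mul hX hY

/-- A bounded factorization (BF) monoid: every non-identity element has a factorization
into irreducibles, and factorization lengths of each element are bounded above. -/
def IsBF (M : Type*) [Monoid M] : Prop :=
  (∀ x : M, x ≠ 1 → ∃ l : List M, IsFactorization l x) ∧
    ∀ x : M, ∃ N : ℕ, ∀ l : List M, IsFactorization l x → l.length ≤ N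

/-- A finite factorization (FF) monoid: every non-identity element has a factorization
into irreducibles, and each element has finitely many factorizations up to permutation. -/
def IsFF (M : Type*) [Monoid M] : Prop :=
  (∀ x : M, x ≠ 1 → ∃ l : List M, IsFactorization l x) ∧
    ∀ x : M,
      {s : Multiset M | ∃ l : List M, (↑l : Multiset M) = s ∧ IsFactorization l x}.Finite
section Aux0

/-- finiteness of bounded-length lists over a finite set -/
lemma finite_lists {α : Type*} {D : Set α} (hD : D.Finite) (N : ℕ) :
    {l : List α | l.length ≤ N ∧ ∀ a ∈ l, a ∈ D}.Finite := by
  have : Finite D := hD.to_subtype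
  have h1 : {l : List D | l.length ≤ N}.Finite := List.finite_length_le _ N
  apply (h1.image (List.map Subtype.val)).subset
  rintro l ⟨hlen, hmem⟩
  refine ⟨l.attach.map (fun a => (⟨a.1, hmem a.1 a.2⟩ : D)), by simpa, ?_⟩
  rw [List.map_map]
  simp

end Aux0

section Aux1
variable {H : Type*} [Monoid H] [DecidableEq H]



lemma redPow.one_mem (X : ↥(redPow H)) : (1 : H) ∈ (X : Finset H) := X.2

lemma redPow.coe_one : ((1 : ↥(redPow H)) : Finset H) = {1} := rfl

lemma redPow.coe_mul (X Y : ↥(redPow H)) : ((X * Y : ↥(redPow H)) : Finset H) = (X : Finset H) * Y := rfl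

lemma redPow.subset_left (X Y : ↥(redPow H)) : (X : Finset H) ⊆ ((X * Y : ↥(redPow H)) : Finset H) := by
  rw [redPow.coe_mul]
  exact Finset.subset_mul_left _ (redPow.one_mem Y)

lemma redPow.subset_right (X Y : ↥(redPow H)) : (Y : Finset H) ⊆ ((X * Y : ↥(redPow H)) : Finset H) := by
  rw [redPow.coe_mul]
  exact Finset.subset_mul_right _ (redPow.one_mem X)

lemma redPow.dvd_subset {A X : ↥(redPow H)} (h : dvdTS A X) : (A : Finset H) ⊆ (X : Finset H) := by
  obtain ⟨U, V, rfl⟩ := h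
  exact (redPow.subset_right U A).trans (redPow.subset_left (U * A) V)

lemma dvdTS_refl {M : Type*} [Monoid M] (x : M) : dvdTS x x := ⟨1, 1, by simp⟩

lemma redPow.dvd_one_iff {A : ↥(redPow H)} : dvdTS A 1 ↔ A = 1 := by
  constructor
  · intro h
    have h1 := redPow.dvd_subset h
    rw [redPow.coe_one] at h1
    have h2 : ({1} : Finset H) ⊆ (A : Finset H) :=
      Finset.singleton_subset_iff.2 (redPow.one_mem A)
    exact Subtype.ext (h1.antisymm h2)
  · rintro rfl; exact dvdTS_refl 1

lemma redPow.nonunit_iff {A : ↥(redPow H)} : isNonUnitDivisor A ↔ A ≠ 1 :=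
  not_congr redPow.dvd_one_iff

lemma redPow.proper_ssubset {A X : ↥(redPow H)} (h : properDvdTS A X) :
    (A : Finset H) ⊂ (X : Finset H) := by
  refine (redPow.dvd_subset h.1).ssubset_of_ne ?_
  intro he
  exact h.2 (Subtype.ext he ▸ dvdTS_refl X)

/-- every list factor divides the product -/
lemma dvd_of_mem_prod {M : Type*} [Monoid M] {l : List M} {a : M} (h : a ∈ l) :
    dvdTS a l.prod := by
  obtain ⟨s, t, rfl⟩ := List.append_of_mem h
  exact ⟨s.prod, t.prod, by rw [List.prod_append, List.prod_cons, mul_assoc]⟩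

/-- existence of factorizations in redPow, unconditionally -/
lemma redPow.exists_factorization (X : ↥(redPow H)) (hX : X ≠ 1) :
    ∃ l : List ↥(redPow H), IsFactorization l X := by
  obtain ⟨n, hn⟩ : ∃ n, (X : Finset H).card ≤ n := ⟨_, le_rfl⟩
  induction n generalizing X with
  | zero => exact absurd (Finset.card_pos.2 ⟨1, redPow.one_mem X⟩) (by omega)
  | succ n ih =>
    by_cases hirr : isIrred X
    · exact ⟨[X], ⟨by simpa using hirr, by simp⟩⟩
    · rw [isIrred] at hirr
      push_neg at hirr
      obtain ⟨Y, Z, hY, hZ, hpY, hpZ, heq⟩ := hirr (redPow.nonunit_iff.2 hX)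
      have hYc : (Y : Finset H).card < (X : Finset H).card :=
        Finset.card_lt_card (redPow.proper_ssubset hpY)
      have hZc : (Z : Finset H).card < (X : Finset H).card :=
        Finset.card_lt_card (redPow.proper_ssubset hpZ)
      obtain ⟨lY, hlY⟩ := ih Y (redPow.nonunit_iff.1 hY) (by omega)
      obtain ⟨lZ, hlZ⟩ := ih Z (redPow.nonunit_iff.1 hZ) (by omega)
      refine ⟨lY ++ lZ, ?_, ?_⟩
      · intro a ha
        rcases List.mem_append.1 ha with h | h
        · exact hlY.1 a h
        · exact hlZ.1 a h
      · rw [List.prod_append, hlY.2, hlZ.2, heq]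

end Aux1

section Aux2
variable {H : Type*} [Monoid H] [DecidableEq H]

lemma redPow.exists_ne_one {A : ↥(redPow H)} (hA : A ≠ 1) :
    ∃ a ∈ (A : Finset H), a ≠ 1 := by
  by_contra h
  push_neg at h
  apply hA
  apply Subtype.ext
  apply Finset.Subset.antisymm
  · intro a ha; simpa using h a ha
  · simpa using redPow.one_mem A

lemma redPow.pow_mem {A : ↥(redPow H)} {a : H} (ha : a ∈ (A : Finset H)) (n : ℕ) :
    a ^ n ∈ ((A ^ n : ↥(redPow H)) : Finset H) := by
  induction n with
  | zero => simpa using redPow.one_mem _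
  | succ n ih =>
    rw [pow_succ A n, pow_succ a n, redPow.coe_mul]
    exact Finset.mul_mem_mul ih ha

lemma redPow.card_lt_card_mul
    (hap : ∀ x : H, x ≠ 1 → (Submonoid.powers x : Set H).Infinite)
    {A : ↥(redPow H)} (hA : A ≠ 1) (B : ↥(redPow H)) :
    ((B : Finset H)).card < (((A * B : ↥(redPow H))) : Finset H).card := by
  apply Finset.card_lt_card
  refine (redPow.subset_right A B).ssubset_of_ne ?_
  intro he
  have hAB : A * B = B := (Subtype.ext he.symm)
  have hpow : ∀ n : ℕ, A ^ n * B = B := by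
    intro n
    induction n with
    | zero => simp
    | succ n ih => rw [pow_succ, mul_assoc, hAB, ih]
  obtain ⟨a, haA, ha1⟩ := redPow.exists_ne_one hA
  have hsub : (Submonoid.powers a : Set H) ⊆ ((B : Finset H) : Set H) := by
    rintro z ⟨n, rfl⟩
    have h1 : a ^ n ∈ ((A ^ n : ↥(redPow H)) : Finset H) := redPow.pow_mem haA n
    have h2 : ((A ^ n : ↥(redPow H)) : Finset H) ⊆ (B : Finset H) := by
      have := redPow.subset_left (A ^ n) B
      rwa [hpow n] at this
    exact h2 h1
  exact ((hap a ha1).mono hsub) (Finset.finite_toSet _)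

lemma redPow.length_lt_card
    (hap : ∀ x : H, x ≠ 1 → (Submonoid.powers x : Set H).Infinite)
    (l : List ↥(redPow H)) (hl : ∀ a ∈ l, a ≠ 1) :
    l.length < ((l.prod : ↥(redPow H)) : Finset H).card := by
  induction l with
  | nil => simp [redPow.coe_one]
  | cons a t ih =>
    have h1 := ih (fun b hb => hl b (List.mem_cons_of_mem a hb))
    have h2 := redPow.card_lt_card_mul hap (hl a List.mem_cons_self) t.prod
    rw [List.prod_cons]
    simp only [List.length_cons]
    omega

end Aux2

section Main
variable {H : Type*} [Monoid H] [DecidableEq H]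

lemma redPow.isBF_of_aperiodic
    (hap : ∀ x : H, x ≠ 1 → (Submonoid.powers x : Set H).Infinite) :
    IsBF (redPow H) := by
  refine ⟨fun X hX => redPow.exists_factorization X hX, fun X => ?_⟩
  refine ⟨(X : Finset H).card, fun l hl => ?_⟩
  have h1 : ∀ a ∈ l, a ≠ (1 : ↥(redPow H)) := fun a ha =>
    redPow.nonunit_iff.1 (hl.1 a ha).1
  have h2 := redPow.length_lt_card hap l h1
  rw [hl.2] at h2
  omega

lemma redPow.aperiodic_of_isBF (h : IsBF (redPow H)) :
    ∀ x : H, x ≠ 1 → (Submonoid.powers x : Set H).Infinite := by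
  intro x hx1
  by_contra hfin
  rw [Set.not_infinite] at hfin
  have h1 : (1 : H) ∈ hfin.toFinset := by
    rw [Set.Finite.mem_toFinset]; exact ⟨0, pow_zero x⟩
  set X : ↥(redPow H) := ⟨hfin.toFinset, h1⟩ with hXdef
  have hxX : x ∈ hfin.toFinset := by
    rw [Set.Finite.mem_toFinset]; exact ⟨1, pow_one x⟩
  have hXne : X ≠ 1 := by
    intro he
    have hx : x ∈ (((1 : ↥(redPow H))) : Finset H) := he ▸ hxX
    rw [redPow.coe_one, Finset.mem_singleton] at hx
    exact hx1 hx
  have hidem : X * X = X := by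
    apply Subtype.ext
    rw [redPow.coe_mul]
    apply Finset.Subset.antisymm
    · intro c hc
      rw [Finset.mem_mul] at hc
      obtain ⟨a, ha, b, hb, rfl⟩ := hc
      show a * b ∈ hfin.toFinset
      rw [Set.Finite.mem_toFinset] at *
      exact Submonoid.mul_mem _ ha hb
    · exact Finset.subset_mul_left _ h1
  have hXpow : ∀ n : ℕ, X ^ (n + 1) = X := by
    intro n
    induction n with
    | zero => simp
    | succ n ih => rw [pow_succ, ih, hidem]
  obtain ⟨hex, hbd⟩ := h
  obtain ⟨l, hl⟩ := hex X hXne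
  have hlne : l ≠ [] := by
    intro he
    rw [he] at hl
    exact hXne (by simpa using hl.2.symm)
  have hlpos : 1 ≤ l.length := List.length_pos_iff.2 hlne
  obtain ⟨N, hN⟩ := hbd X
  set L : List ↥(redPow H) := (List.replicate (N + 1) l).flatten with hL
  have hfact : IsFactorization L X := by
    constructor
    · intro a ha
      rw [hL, List.mem_flatten] at ha
      obtain ⟨s, hs, has⟩ := ha
      rw [List.eq_of_mem_replicate hs] at has
      exact hl.1 a has
    · rw [hL, List.prod_flatten, List.map_replicate, List.prod_replicate, hl.2, hXpow]
  have hlen : L.length = (N + 1) * l.length := by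
    rw [hL, List.length_flatten, List.map_replicate, List.sum_replicate, smul_eq_mul]
  have hle := hN L hfact
  have : N + 1 ≤ (N + 1) * l.length := Nat.le_mul_of_pos_right _ (by omega)
  omega

lemma isBF_of_isFF {M : Type*} [Monoid M] (h : IsFF M) : IsBF M := by
  refine ⟨h.1, fun x => ?_⟩
  have hS := h.2 x
  refine ⟨hS.toFinset.sup Multiset.card, fun l hl => ?_⟩
  have hmem : (↑l : Multiset M) ∈ hS.toFinset := hS.mem_toFinset.2 ⟨l, rfl, hl⟩
  have h2 := Finset.le_sup (f := Multiset.card) hmem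
  simpa using h2

lemma redPow.isFF_of_isBF (h : IsBF (redPow H)) : IsFF (redPow H) := by
  refine ⟨h.1, fun X => ?_⟩
  obtain ⟨N, hN⟩ := h.2 X
  have hDfin : {A : ↥(redPow H) | (A : Finset H) ⊆ (X : Finset H)}.Finite := by
    have hfin : {B : Finset H | B ⊆ (X : Finset H)}.Finite := by
      convert (X : Finset H).powerset.finite_toSet using 1
      ext B; simp [Finset.mem_powerset]
    have heq : {A : ↥(redPow H) | (A : Finset H) ⊆ (X : Finset H)}
        = Subtype.val ⁻¹' {B : Finset H | B ⊆ (X : Finset H)} := rfl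
    rw [heq]
    exact hfin.preimage (fun a _ b _ hab => Subtype.val_injective hab)
  have hLfin := finite_lists hDfin N
  apply (hLfin.image (fun l : List ↥(redPow H) => (↑l : Multiset ↥(redPow H)))).subset
  rintro s ⟨l, rfl, hl⟩
  refine ⟨l, ⟨hN l hl, fun a ha => ?_⟩, rfl⟩
  exact redPow.dvd_subset (hl.2 ▸ dvd_of_mem_prod ha)

end Main

theorem stmt_6 {H : Type*} [Monoid H] [DecidableEq H] :
    ((∀ x : H, x ≠ 1 → (Submonoid.powers x : Set H).Infinite) ↔ IsBF (redPow H)) ∧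
    (IsBF (redPow H) ↔ IsFF (redPow H)) :=
  ⟨⟨redPow.isBF_of_aperiodic, redPow.aperiodic_of_isBF⟩,
   ⟨redPow.isFF_of_isBF, isBF_of_isFF⟩⟩
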